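/- Let A, C ∈ ℂ^{n×n} be Hermitian with C indefinite. Then the pair (A, C) has at least one 2D-eigentriple: there exist μ, λ ∈ ℝ and x ∈ ℂ^n with (A − μC)x = λx, x^H C x = 0, and x^H x = 1. -/

import Mathlib

open Matrix

namespace Eig2D

noncomputable def qf {n : ℕ} (M : Matrix (Fin n) (Fin n) ℂ) (x : Fin n → ℂ) : ℝ :=
  (star x ⬝ᵥ (M *ᵥ x)).re

lemma quad_decomp {n : ℕ} {M : Matrix (Fin n) (Fin n) ℂ} (hM : M.IsHermitian) (x : Fin n → ℂ) :
    ∃ q : Fin n → ℝ, (∀ i, 0 ≤ q i) ∧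
      star x ⬝ᵥ (M *ᵥ x) = ∑ i, (hM.eigenvalues i : ℂ) * (q i : ℂ) ∧
      star x ⬝ᵥ x = ∑ i, (q i : ℂ) := by
  classical
  set U : Matrix (Fin n) (Fin n) ℂ := (hM.eigenvectorUnitary : Matrix (Fin n) (Fin n) ℂ) with hU
  set y : Fin n → ℂ := star U *ᵥ x with hy
  have hsy : star y = star x ᵥ* U := by
    rw [hy, star_mulVec, star_eq_conjTranspose, conjTranspose_conjTranspose]
  refine ⟨fun i => Complex.normSq (y i), fun i => Complex.normSq_nonneg _, ?_, ?_⟩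
  · conv_lhs => rw [hM.spectral_theorem]
    rw [Unitary.conjStarAlgAut_apply, ← mulVec_mulVec, ← mulVec_mulVec, dotProduct_mulVec, ← hsy]
    simp only [dotProduct, mulVec_diagonal, Function.comp_apply, Pi.star_apply]
    congr 1; funext i
    rw [show ((Complex.normSq (y i) : ℝ) : ℂ) = (starRingEnd ℂ) (y i) * y i from
      (Complex.normSq_eq_conj_mul_self).symm ▸ rfl]
    rw [← hy]
    simp only [Complex.star_def]
    exact mul_left_comm _ _ _
  · have h2 : star x ⬝ᵥ x = star y ⬝ᵥ y := by
      rw [hsy, hy, ← dotProduct_mulVec, mulVec_mulVec, hU, ← Unitary.coe_star,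
        Unitary.coe_mul_star_self, one_mulVec]
    rw [h2]
    simp only [dotProduct, Pi.star_apply]
    congr 1; funext i
    rw [show ((Complex.normSq (y i) : ℝ) : ℂ) = (starRingEnd ℂ) (y i) * y i from
      (Complex.normSq_eq_conj_mul_self).symm ▸ rfl]
    simp only [Complex.star_def]

/-- the quadratic form of a Hermitian matrix is real -/
lemma qf_real {n : ℕ} {M : Matrix (Fin n) (Fin n) ℂ} (hM : M.IsHermitian) (x : Fin n → ℂ) :
    star x ⬝ᵥ (M *ᵥ x) = ((qf M x : ℝ) : ℂ) := by
  obtain ⟨q, _, h1, _⟩ := quad_decomp hM x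
  have : star x ⬝ᵥ (M *ᵥ x) = ((∑ i, hM.eigenvalues i * q i : ℝ) : ℂ) := by
    rw [h1]; push_cast; ring
  rw [qf, this]
  norm_num

/-- the largest eigenvalue -/
noncomputable def topEig {n : ℕ} {M : Matrix (Fin n) (Fin n) ℂ} (hM : M.IsHermitian) : ℝ :=
  ⨆ i, hM.eigenvalues i

lemma dot_self_real {n : ℕ} (x : Fin n → ℂ) :
    star x ⬝ᵥ x = ((∑ i, Complex.normSq (x i) : ℝ) : ℂ) := by
  simp only [dotProduct, Pi.star_apply]
  push_cast
  congr 1; funext i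
  rw [show ((Complex.normSq (x i) : ℝ) : ℂ) = (starRingEnd ℂ) (x i) * x i from
    (Complex.normSq_eq_conj_mul_self).symm ▸ rfl]
  simp only [Complex.star_def]

lemma sum_q_eq_one {n : ℕ} {x : Fin n → ℂ} {q : Fin n → ℝ} (hx : star x ⬝ᵥ x = 1)
    (hq : star x ⬝ᵥ x = ∑ i, (q i : ℂ)) : ∑ i, q i = 1 := by
  have : ((∑ i, q i : ℝ) : ℂ) = 1 := by push_cast; rw [← hq, hx]
  exact_mod_cast this

lemma rayleigh_le {n : ℕ} [Nonempty (Fin n)] {M : Matrix (Fin n) (Fin n) ℂ}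
    (hM : M.IsHermitian) {x : Fin n → ℂ} (hx : star x ⬝ᵥ x = 1) : qf M x ≤ topEig hM := by
  obtain ⟨q, hq0, h1, h2⟩ := quad_decomp hM x
  have hsum : ∑ i, q i = 1 := sum_q_eq_one hx h2
  have hqf : qf M x = ∑ i, hM.eigenvalues i * q i := by
    have : star x ⬝ᵥ (M *ᵥ x) = ((∑ i, hM.eigenvalues i * q i : ℝ) : ℂ) := by
      rw [h1]; push_cast; ring
    rw [qf, this, Complex.ofReal_re]
  rw [hqf]
  calc ∑ i, hM.eigenvalues i * q i ≤ ∑ i, topEig hM * q i := by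
        refine Finset.sum_le_sum fun i _ => mul_le_mul_of_nonneg_right ?_ (hq0 i)
        exact le_ciSup (Set.Finite.bddAbove (Set.finite_range _)) i
    _ = topEig hM := by rw [← Finset.mul_sum, hsum, mul_one]

lemma abs_qf_le {n : ℕ} [Nonempty (Fin n)] {M : Matrix (Fin n) (Fin n) ℂ}
    (hM : M.IsHermitian) {x : Fin n → ℂ} (hx : star x ⬝ᵥ x = 1) :
    |qf M x| ≤ ⨆ i, |hM.eigenvalues i| := by
  obtain ⟨q, hq0, h1, h2⟩ := quad_decomp hM x
  have hsum : ∑ i, q i = 1 := sum_q_eq_one hx h2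
  have hqf : qf M x = ∑ i, hM.eigenvalues i * q i := by
    have : star x ⬝ᵥ (M *ᵥ x) = ((∑ i, hM.eigenvalues i * q i : ℝ) : ℂ) := by
      rw [h1]; push_cast; ring
    rw [qf, this, Complex.ofReal_re]
  rw [hqf]
  calc |∑ i, hM.eigenvalues i * q i| ≤ ∑ i, |hM.eigenvalues i * q i| :=
        Finset.abs_sum_le_sum_abs _ _
    _ ≤ ∑ i, (⨆ j, |hM.eigenvalues j|) * q i := by
        refine Finset.sum_le_sum fun i _ => ?_
        rw [abs_mul, abs_of_nonneg (hq0 i)]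
        exact mul_le_mul_of_nonneg_right
          (le_ciSup (f := fun j => |hM.eigenvalues j|)
            (Set.Finite.bddAbove (Set.finite_range _)) i) (hq0 i)
    _ = ⨆ j, |hM.eigenvalues j| := by rw [← Finset.mul_sum, hsum, mul_one]

lemma exists_top_eigvec {n : ℕ} [Nonempty (Fin n)] {M : Matrix (Fin n) (Fin n) ℂ}
    (hM : M.IsHermitian) :
    ∃ x : Fin n → ℂ, M *ᵥ x = (topEig hM : ℂ) • x ∧ star x ⬝ᵥ x = 1 := by
  obtain ⟨i, hi⟩ := Finite.exists_max hM.eigenvalues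
  have htop : topEig hM = hM.eigenvalues i :=
    le_antisymm (ciSup_le hi) (le_ciSup (Set.Finite.bddAbove (Set.finite_range _)) i)
  refine ⟨⇑(hM.eigenvectorBasis i), ?_, ?_⟩
  · rw [hM.mulVec_eigenvectorBasis, htop]
    funext j
    simp [Complex.real_smul]
  · have h : (inner ℂ (hM.eigenvectorBasis i) (hM.eigenvectorBasis i) : ℂ) = 1 := by
      simpa using (orthonormal_iff_ite.mp hM.eigenvectorBasis.orthonormal) i i
    rwa [EuclideanSpace.inner_eq_star_dotProduct, dotProduct_comm] at h

lemma qf_eigvec {n : ℕ} {M : Matrix (Fin n) (Fin n) ℂ} {x : Fin n → ℂ} {t : ℝ}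
    (hev : M *ᵥ x = (t : ℂ) • x) (hx : star x ⬝ᵥ x = 1) : qf M x = t := by
  rw [qf, hev, dotProduct_smul, hx, smul_eq_mul, mul_one, Complex.ofReal_re]

lemma qf_sub_smul {n : ℕ} (A C : Matrix (Fin n) (Fin n) ℂ) (μ : ℝ) (x : Fin n → ℂ) :
    qf (A - (μ : ℂ) • C) x = qf A x - μ * qf C x := by
  simp only [qf, sub_mulVec, smul_mulVec, dotProduct_sub, dotProduct_smul, smul_eq_mul,
    Complex.sub_re, Complex.re_ofReal_mul]

lemma exists_unit_eigvec {n : ℕ} {M : Matrix (Fin n) (Fin n) ℂ}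
    (hM : M.IsHermitian) (i : Fin n) :
    ∃ x : Fin n → ℂ, M *ᵥ x = ((hM.eigenvalues i : ℝ) : ℂ) • x ∧ star x ⬝ᵥ x = 1 := by
  refine ⟨⇑(hM.eigenvectorBasis i), ?_, ?_⟩
  · rw [hM.mulVec_eigenvectorBasis]
    funext j
    simp [Complex.real_smul]
  · have h : (inner ℂ (hM.eigenvectorBasis i) (hM.eigenvectorBasis i) : ℂ) = 1 := by
      simpa using (orthonormal_iff_ite.mp hM.eigenvectorBasis.orthonormal) i i
    rwa [EuclideanSpace.inner_eq_star_dotProduct, dotProduct_comm] at h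

lemma qf_real_smul {n : ℕ} (M : Matrix (Fin n) (Fin n) ℂ) (c : ℝ) (v : Fin n → ℂ) :
    qf M ((c : ℂ) • v) = c ^ 2 * qf M v := by
  have : star ((c : ℂ) • v) ⬝ᵥ (M *ᵥ ((c : ℂ) • v))
      = (c : ℂ) * ((c : ℂ) * (star v ⬝ᵥ (M *ᵥ v))) := by
    rw [mulVec_smul, star_smul, smul_dotProduct, dotProduct_smul]
    simp [Complex.conj_ofReal, smul_eq_mul]
  rw [qf, this, Complex.re_ofReal_mul, Complex.re_ofReal_mul, qf]
  ring

lemma qf_cont {n : ℕ} (M : Matrix (Fin n) (Fin n) ℂ) : Continuous (qf M) :=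
  Complex.continuous_re.comp
    (Continuous.dotProduct continuous_star (continuous_const.matrix_mulVec continuous_id))

lemma dot_self_pos {n : ℕ} {x : Fin n → ℂ} (hx : x ≠ 0) : 0 < (star x ⬝ᵥ x).re := by
  rw [dot_self_real, Complex.ofReal_re]
  obtain ⟨i, hi⟩ := Function.ne_iff.mp hx
  exact Finset.sum_pos' (fun j _ => Complex.normSq_nonneg _)
    ⟨i, Finset.mem_univ i, Complex.normSq_pos.mpr hi⟩

lemma sphere_compact {n : ℕ} : IsCompact {x : Fin n → ℂ | star x ⬝ᵥ x = 1} := by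
  refine IsCompact.of_isClosed_subset (isCompact_closedBall (0 : Fin n → ℂ) 1) ?_ ?_
  · exact isClosed_eq (Continuous.dotProduct continuous_star continuous_id)
      continuous_const
  · intro x hx
    simp only [Set.mem_setOf_eq] at hx
    rw [Metric.mem_closedBall, dist_zero_right]
    have hsum : ∑ i, Complex.normSq (x i) = 1 := by
      have := dot_self_real x
      rw [hx] at this
      exact_mod_cast this.symm
    refine (pi_norm_le_iff_of_nonneg zero_le_one).mpr fun i => ?_
    have h1 : Complex.normSq (x i) ≤ 1 := by
      rw [← hsum]
      exact Finset.single_le_sum (fun j _ => Complex.normSq_nonneg _) (Finset.mem_univ i)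
    have h2 : ‖x i‖ ^ 2 ≤ 1 := by rw [Complex.sq_norm]; exact h1
    nlinarith [norm_nonneg (x i)]

end Eig2D

/-- The eigenvalues of a Hermitian matrix, sorted in decreasing order:
index `0` is the largest, index `n-1` the smallest. -/
noncomputable def sortedEig {n : ℕ} {M : Matrix (Fin n) (Fin n) ℂ} (hM : M.IsHermitian) :
    Fin n → ℝ :=
  fun i => (hM.eigenvalues ∘ Tuple.sort hM.eigenvalues) i.rev

/-- The parameter matrix `H(μ) = A - μ C`. -/
noncomputable def pencil {n : ℕ} (A C : Matrix (Fin n) (Fin n) ℂ) (μ : ℝ) :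
    Matrix (Fin n) (Fin n) ℂ :=
  A - (μ : ℂ) • C

theorem pencil_isHermitian {n : ℕ} {A C : Matrix (Fin n) (Fin n) ℂ}
    (hA : A.IsHermitian) (hC : C.IsHermitian) (μ : ℝ) :
    (pencil A C μ).IsHermitian := by
  unfold pencil
  refine hA.sub ?_
  unfold Matrix.IsHermitian at *
  rw [Matrix.conjTranspose_smul, hC]
  simp

/-- `(μ, λ, x)` is a 2D-eigentriple of the pair `(A, C)`:
`(A - μC)x = λx`, `xᴴCx = 0` and `xᴴx = 1`. -/
def Is2DEigentriple {n : ℕ} (A C : Matrix (Fin n) (Fin n) ℂ) (μ lam : ℝ)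
    (x : Fin n → ℂ) : Prop :=
  (A - (μ : ℂ) • C) *ᵥ x = (lam : ℂ) • x ∧ star x ⬝ᵥ (C *ᵥ x) = 0 ∧ star x ⬝ᵥ x = 1

/-- `(μ, λ)` is a 2D-eigenvalue of the pair `(A, C)`. -/
def Is2DEigenvalue {n : ℕ} (A C : Matrix (Fin n) (Fin n) ℂ) (μ lam : ℝ) : Prop :=
  ∃ x : Fin n → ℂ, Is2DEigentriple A C μ lam x

/-- A Hermitian matrix is indefinite: it has a positive and a negative eigenvalue. -/
def IsIndefinite {n : ℕ} {M : Matrix (Fin n) (Fin n) ℂ} (hM : M.IsHermitian) : Prop :=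
  (∃ i, 0 < hM.eigenvalues i) ∧ (∃ j, hM.eigenvalues j < 0)

section MainProof
open Eig2D Filter Topology

set_option maxHeartbeats 2000000 in
/-- For Hermitian `A, C` with `C` indefinite, the pair `(A, C)`
has at least one 2D-eigentriple. -/
theorem exists_2DEigentriple
    {n : ℕ} (A C : Matrix (Fin n) (Fin n) ℂ)
    (hA : A.IsHermitian) (hC : C.IsHermitian) (hCind : IsIndefinite hC) :
    ∃ (μ lam : ℝ) (x : Fin n → ℂ), Is2DEigentriple A C μ lam x := by
  classical
  obtain ⟨⟨ip, hip⟩, ⟨im, him⟩⟩ := hCind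
  haveI : Nonempty (Fin n) := ⟨ip⟩
  -- the function `f μ` = largest eigenvalue of the pencil
  set f : ℝ → ℝ := fun μ => topEig (pencil_isHermitian hA hC μ) with hfdef
  have hqp : ∀ (μ : ℝ) (x : Fin n → ℂ), qf (pencil A C μ) x = qf A x - μ * qf C x :=
    fun μ x => qf_sub_smul A C μ x
  have hub : ∀ (μ : ℝ) (x : Fin n → ℂ), star x ⬝ᵥ x = 1 → qf (pencil A C μ) x ≤ f μ :=
    fun μ x hx => rayleigh_le _ hx
  have hev : ∀ μ : ℝ, ∃ x : Fin n → ℂ,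
      pencil A C μ *ᵥ x = ((f μ : ℝ) : ℂ) • x ∧ star x ⬝ᵥ x = 1 :=
    fun μ => exists_top_eigvec _
  set K : ℝ := ⨆ i, |hC.eigenvalues i| with hKdef
  have hK : ∀ x : Fin n → ℂ, star x ⬝ᵥ x = 1 → |qf C x| ≤ K := fun x hx => abs_qf_le hC hx
  have hKnn : 0 ≤ K :=
    le_trans (abs_nonneg (hC.eigenvalues ip))
      (le_ciSup (f := fun i => |hC.eigenvalues i|)
        (Set.Finite.bddAbove (Set.finite_range _)) ip)
  -- Lipschitz bound
  have hlip : ∀ μ ν : ℝ, f μ ≤ f ν + K * |μ - ν| := by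
    intro μ ν
    obtain ⟨x, hx1, hx2⟩ := hev μ
    have e1 : f μ = qf (pencil A C μ) x := (qf_eigvec hx1 hx2).symm
    have e2 : qf (pencil A C μ) x = qf (pencil A C ν) x + (ν - μ) * qf C x := by
      rw [hqp, hqp]; ring
    have e3 : qf (pencil A C ν) x ≤ f ν := hub ν x hx2
    have e4 : (ν - μ) * qf C x ≤ K * |μ - ν| := by
      calc (ν - μ) * qf C x ≤ |(ν - μ) * qf C x| := le_abs_self _
        _ = |qf C x| * |μ - ν| := by rw [abs_mul, abs_sub_comm]; ring
        _ ≤ K * |μ - ν| := mul_le_mul_of_nonneg_right (hK x hx2) (abs_nonneg _)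
    linarith
  have hfc : Continuous f := by
    have hl : LipschitzWith (Real.toNNReal K) f := by
      apply LipschitzWith.of_dist_le_mul
      intro μ ν
      rw [Real.dist_eq, Real.dist_eq, Real.coe_toNNReal K hKnn, abs_sub_le_iff]
      constructor
      · linarith [hlip μ ν]
      · have h2 := hlip ν μ
        rw [abs_sub_comm] at h2
        linarith
    exact hl.continuous
  -- coercivity
  obtain ⟨vp, hvp1, hvp2⟩ := exists_unit_eigvec hC ip
  obtain ⟨vm, hvm1, hvm2⟩ := exists_unit_eigvec hC im
  set γp : ℝ := hC.eigenvalues ip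
  set γm : ℝ := hC.eigenvalues im
  have hlow : ∀ (μ : ℝ) (v : Fin n → ℂ) (γ : ℝ), C *ᵥ v = ((γ : ℝ) : ℂ) • v →
      star v ⬝ᵥ v = 1 → qf A v - μ * γ ≤ f μ := by
    intro μ v γ hv1 hv2
    have := hub μ v hv2
    rw [hqp, qf_eigvec hv1 hv2] at this
    exact this
  set a : ℝ := qf A vp
  set b : ℝ := qf A vm
  set mlo : ℝ := (a - f 0 - 1) / γp with hmlodef
  set mhi : ℝ := (b - f 0 - 1) / γm with hmhidef
  have hcoer_lo : ∀ μ : ℝ, μ < mlo → f 0 + 1 < f μ := by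
    intro μ hμ
    have h1 : a - μ * γp ≤ f μ := hlow μ vp γp hvp1 hvp2
    have h2 : μ * γp < a - f 0 - 1 := by
      rw [hmlodef, lt_div_iff₀ hip] at hμ
      linarith [hμ]
    linarith
  have hcoer_hi : ∀ μ : ℝ, mhi < μ → f 0 + 1 < f μ := by
    intro μ hμ
    have h1 : b - μ * γm ≤ f μ := hlow μ vm γm hvm1 hvm2
    have h2 : μ * γm < b - f 0 - 1 := by
      rw [hmhidef, div_lt_iff_of_neg him] at hμ
      linarith [hμ]
    linarith
  -- minimizer on a compact interval
  set R : ℝ := max |mlo| |mhi| with hRdef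
  have hR0 : (0 : ℝ) ∈ Set.Icc (-R) R := by
    constructor
    · have : 0 ≤ R := le_trans (abs_nonneg mlo) (le_max_left _ _)
      linarith
    · exact le_trans (abs_nonneg mlo) (le_max_left _ _)
  obtain ⟨μs, hμsI, hmin⟩ :=
    isCompact_Icc.exists_isMinOn ⟨0, hR0⟩ hfc.continuousOn
  have hglobal : ∀ μ : ℝ, f μs ≤ f μ := by
    intro μ
    by_cases hμ : μ ∈ Set.Icc (-R) R
    · exact hmin hμ
    · have hf0 : f μs ≤ f 0 := hmin hR0
      rw [Set.mem_Icc, not_and_or] at hμ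
      rcases hμ with hμ | hμ
      · push_neg at hμ
        have : μ < mlo := by
          have : -R ≤ -|mlo| := by simp [hRdef]
          have h2 : -|mlo| ≤ mlo := neg_abs_le mlo
          linarith
        linarith [hcoer_lo μ this]
      · push_neg at hμ
        have : mhi < μ := by
          have h1 : |mhi| ≤ R := le_max_right _ _
          have h2 : mhi ≤ |mhi| := le_abs_self mhi
          linarith
        linarith [hcoer_hi μ this]
  -- the two-sided limit argument
  have key : ∀ σ : ℝ, σ ≠ 0 → ∃ x : Fin n → ℂ, star x ⬝ᵥ x = 1 ∧
      pencil A C μs *ᵥ x = ((f μs : ℝ) : ℂ) • x ∧ σ * qf C x ≤ 0 := by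
    intro σ hσ
    set μseq : ℕ → ℝ := fun k => μs + σ / ((k : ℝ) + 1) with hμseq
    choose xs hxs1 hxs2 using fun k => hev (μseq k)
    have hsign : ∀ k, σ * qf C (xs k) ≤ 0 := by
      intro k
      have hk : (0 : ℝ) < (k : ℝ) + 1 := by positivity
      have h1 : qf (pencil A C μs) (xs k) ≤ f μs := hub _ _ (hxs2 k)
      have h2 : qf (pencil A C (μseq k)) (xs k) = f (μseq k) := qf_eigvec (hxs1 k) (hxs2 k)
      have h3 : f μs ≤ f (μseq k) := hglobal _
      have h4 : qf (pencil A C μs) (xs k) =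
          qf (pencil A C (μseq k)) (xs k) + (σ / ((k : ℝ) + 1)) * qf C (xs k) := by
        rw [hqp, hqp, hμseq]; ring
      have h5 : (σ / ((k : ℝ) + 1)) * qf C (xs k) ≤ 0 := by linarith
      have h6 : σ * qf C (xs k) = ((k : ℝ) + 1) * ((σ / ((k : ℝ) + 1)) * qf C (xs k)) := by
        field_simp
      rw [h6]
      exact mul_nonpos_of_nonneg_of_nonpos (le_of_lt hk) h5
    obtain ⟨x, hxS, φ, hφ, hconv⟩ := sphere_compact.tendsto_subseq (fun k => hxs2 k)
    have hμt : Tendsto (fun k => μseq (φ k)) atTop (𝓝 μs) := by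
      have h0 : Tendsto (fun k : ℕ => μs + σ / ((k : ℝ) + 1)) atTop (𝓝 (μs + σ * 0)) := by
        refine tendsto_const_nhds.add ?_
        have := tendsto_one_div_add_atTop_nhds_zero_nat.const_mul σ
        simpa [div_eq_mul_inv, mul_comm] using this
      rw [mul_zero, add_zero] at h0
      exact h0.comp hφ.tendsto_atTop
    refine ⟨x, hxS, ?_, ?_⟩
    · have hpv : ∀ (μ : ℝ) (v : Fin n → ℂ),
          pencil A C μ *ᵥ v = A *ᵥ v - ((μ : ℝ) : ℂ) • (C *ᵥ v) := by
        intro μ v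
        rw [pencil, sub_mulVec, smul_mulVec]
      have hAt : Tendsto (fun k => A *ᵥ xs (φ k)) atTop (𝓝 (A *ᵥ x)) :=
        (((continuous_const.matrix_mulVec continuous_id).tendsto x).comp hconv :)
      have hCt : Tendsto (fun k => C *ᵥ xs (φ k)) atTop (𝓝 (C *ᵥ x)) :=
        (((continuous_const.matrix_mulVec continuous_id).tendsto x).comp hconv :)
      have hst : Tendsto (fun k => ((μseq (φ k) : ℝ) : ℂ)) atTop (𝓝 ((μs : ℂ))) :=
        (Complex.continuous_ofReal.tendsto _).comp hμt
      have hL : Tendsto (fun k => pencil A C (μseq (φ k)) *ᵥ xs (φ k)) atTop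
          (𝓝 (pencil A C μs *ᵥ x)) := by
        rw [hpv]
        have : (fun k => pencil A C (μseq (φ k)) *ᵥ xs (φ k)) =
            fun k => A *ᵥ xs (φ k) - ((μseq (φ k) : ℝ) : ℂ) • (C *ᵥ xs (φ k)) :=
          funext fun k => hpv _ _
        rw [this]
        exact hAt.sub (hst.smul hCt)
      have hR : Tendsto (fun k => ((f (μseq (φ k)) : ℝ) : ℂ) • xs (φ k)) atTop
          (𝓝 (((f μs : ℝ) : ℂ) • x)) :=
        Tendsto.smul ((Complex.continuous_ofReal.tendsto _).comp
          ((hfc.tendsto μs).comp hμt)) hconv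
      have heq : (fun k => pencil A C (μseq (φ k)) *ᵥ xs (φ k)) =
          fun k => ((f (μseq (φ k)) : ℝ) : ℂ) • xs (φ k) := funext fun k => hxs1 (φ k)
      exact tendsto_nhds_unique (heq ▸ hL) hR
    · have ht : Tendsto (fun k => σ * qf C (xs (φ k))) atTop (𝓝 (σ * qf C x)) :=
        tendsto_const_nhds.mul (((qf_cont C).tendsto x).comp hconv)
      exact le_of_tendsto ht (Eventually.of_forall fun k => hsign (φ k))
  -- a finishing move: normalize an isotropic eigenvector
  have finish : ∀ z : Fin n → ℂ, z ≠ 0 → pencil A C μs *ᵥ z = ((f μs : ℝ) : ℂ) • z →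
      qf C z = 0 → ∃ (μ lam : ℝ) (x : Fin n → ℂ), Is2DEigentriple A C μ lam x := by
    intro z hz hze hz0
    set N : ℝ := ∑ i, Complex.normSq (z i) with hNdef
    have hNpos : 0 < N := by
      have := dot_self_pos hz
      rwa [dot_self_real, Complex.ofReal_re] at this
    have hsqrt : Real.sqrt N ≠ 0 := by positivity
    set s : ℝ := (Real.sqrt N)⁻¹ with hsdef
    have hsq : Real.sqrt N ^ 2 = N := Real.sq_sqrt hNpos.le
    have hs2 : s * (s * N) = 1 := by
      rw [hsdef, ← hsq]
      field_simp
      rw [Real.sqrt_sq (Real.sqrt_nonneg N)]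
    refine ⟨μs, f μs, (s : ℂ) • z, ?_, ?_, ?_⟩
    · show (A - ((μs : ℝ) : ℂ) • C) *ᵥ ((s : ℂ) • z) = ((f μs : ℝ) : ℂ) • ((s : ℂ) • z)
      have : (A - ((μs : ℝ) : ℂ) • C) *ᵥ ((s : ℂ) • z) = (s : ℂ) • (pencil A C μs *ᵥ z) := by
        rw [mulVec_smul]; rfl
      rw [this, hze, smul_comm]
    · have h1 : qf C ((s : ℂ) • z) = 0 := by rw [qf_real_smul, hz0, mul_zero]
      rw [qf_real hC, h1, Complex.ofReal_zero]
    · calc star ((s : ℂ) • z) ⬝ᵥ ((s : ℂ) • z)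
          = ((s : ℝ) : ℂ) * (((s : ℝ) : ℂ) * ((N : ℝ) : ℂ)) := by
            rw [star_smul, smul_dotProduct, dotProduct_smul, dot_self_real, ← hNdef]
            simp [Complex.conj_ofReal, smul_eq_mul]
        _ = ((s * (s * N) : ℝ) : ℂ) := by push_cast; ring
        _ = 1 := by rw [hs2, Complex.ofReal_one]
  have unit_ne_zero : ∀ z : Fin n → ℂ, star z ⬝ᵥ z = 1 → z ≠ 0 := by
    intro z hz h0
    rw [h0, star_zero, zero_dotProduct] at hz
    exact zero_ne_one hz
  obtain ⟨x, hx1, hx2, hx3⟩ := key 1 one_ne_zero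
  obtain ⟨y, hy1, hy2, hy3⟩ := key (-1) (by norm_num)
  rw [one_mul] at hx3
  have hy3' : 0 ≤ qf C y := by nlinarith [hy3]
  rcases eq_or_lt_of_le hx3 with hx0 | hxneg
  · exact finish x (unit_ne_zero x hx1) hx2 hx0
  rcases eq_or_lt_of_le hy3' with hy0 | hypos
  · exact finish y (unit_ne_zero y hy1) hy2 hy0.symm
  -- now `qf C x < 0 < qf C y`; interpolate
  set w : ℝ → (Fin n → ℂ) := fun t => ((1 - t : ℝ) : ℂ) • x + ((t : ℝ) : ℂ) • y with hwdef
  have hweig : ∀ t : ℝ, pencil A C μs *ᵥ w t = ((f μs : ℝ) : ℂ) • w t := by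
    intro t
    simp only [hwdef]
    rw [mulVec_add, mulVec_smul, mulVec_smul, hx2, hy2, smul_add,
      smul_comm (((1 - t : ℝ)) : ℂ) (((f μs : ℝ)) : ℂ) x,
      smul_comm (((t : ℝ)) : ℂ) (((f μs : ℝ)) : ℂ) y]
  set g : ℝ → ℝ := fun t => qf C (w t) with hgdef
  have hgc : Continuous g := by
    refine (qf_cont C).comp ?_
    refine Continuous.add (Continuous.smul (f := fun t : ℝ => ((1 - t : ℝ) : ℂ)) ?_ continuous_const)
      (Continuous.smul (f := fun t : ℝ => ((t : ℝ) : ℂ)) ?_ continuous_const)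
    · exact Complex.continuous_ofReal.comp (continuous_const.sub continuous_id)
    · exact Complex.continuous_ofReal
  have hg0 : g 0 = qf C x := by
    simp only [hgdef, hwdef]
    norm_num
  have hg1 : g 1 = qf C y := by
    simp only [hgdef, hwdef]
    norm_num
  have h0mem : (0 : ℝ) ∈ Set.Icc (g 0) (g 1) := by
    rw [hg0, hg1]; exact ⟨hxneg.le, hypos.le⟩
  obtain ⟨t, htI, hgt⟩ := intermediate_value_Icc (zero_le_one) hgc.continuousOn h0mem
  have hwne : w t ≠ 0 := by
    intro hw0
    by_cases ht0 : t = 0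
    · have hx0 : x = 0 := by
        have hwt : w t = x := by simp [hwdef, ht0]
        rw [hwt] at hw0
        exact hw0
      exact unit_ne_zero x hx1 hx0
    · have htC : (t : ℂ) ≠ 0 := by exact_mod_cast ht0
      have hyx : ∀ i, (t : ℂ) * y i = ((t - 1 : ℝ) : ℂ) * x i := by
        intro i
        have h := congrFun hw0 i
        simp only [hwdef, Pi.add_apply, Pi.smul_apply, Pi.zero_apply, smul_eq_mul] at h
        push_cast at h ⊢
        linear_combination h
      have hy0 : y = (((t - 1) / t : ℝ) : ℂ) • x := by
        funext i
        have h := hyx i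
        simp only [Pi.smul_apply, smul_eq_mul]
        push_cast at h ⊢
        field_simp
        linear_combination h
      have hq : qf C y = ((t - 1) / t) ^ 2 * qf C x := by
        rw [hy0, qf_real_smul]
      nlinarith [sq_nonneg ((t - 1) / t), mul_nonpos_of_nonneg_of_nonpos
        (sq_nonneg ((t - 1) / t)) hxneg.le]
  exact finish (w t) hwne (hweig t) hgt

end MainProof
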